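/- Let A be a real number with 0 < A < 1 and let k be a real number satisfying either −A < k < 0 or k < −1/A. Then there exist real numbers p and d such that (Ak − d + p)² − 4(Akp + d) < 0 and (Ak − d + A²p)² − 4A²(Akp + d) < 0. -/
import Mathlib


theorem exists_params_negative_discriminants
    (A : ℝ) (hA0 : 0 < A) (hA1 : A < 1)
    (k : ℝ) (hk : (-A < k ∧ k < 0) ∨ k < -1 / A) :
    ∃ p d : ℝ,
      (A * k - d + p) ^ 2 - 4 * (A * k * p + d) < 0 ∧
      (A * k - d + A ^ 2 * p) ^ 2 - 4 * A ^ 2 * (A * k * p + d) < 0 := by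
  have hA2 : A^2 < 1 := by nlinarith
  have hBpos : (0:ℝ) < 1 - A^2 := by linarith
  have hB : (0:ℝ) < (1 - A^2)^2 := pow_pos hBpos 2
  have hBne : ((1 - A^2)^2 : ℝ) ≠ 0 := ne_of_gt hB
  rcases hk with ⟨h1, h2⟩ | h1
  · -- case -A < k < 0
    set p := 2*A^2*(A*k+1)/((1-A^2)^2) with hp
    have e1 : 0 < k + A := by linarith
    have e2 : 0 < A^3*k + 1 := by nlinarith [mul_pos (pow_pos hA0 3) e1, mul_pos hBpos (by positivity : (0:ℝ) < 1 + A^2)]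
    have hf : 0 < (k+A)*(A^3*k+1) := mul_pos e1 e2
    refine ⟨p, A*k + p, ?_, ?_⟩
    · have key : ((A * k - (A*k + p) + p) ^ 2 - 4 * (A * k * p + (A*k + p))) * (1-A^2)^2
          = -4*(A*((k+A)*(A^3*k+1)) + (A*(A*k+1))^2) := by
        rw [hp]; field_simp; ring
      have hneg : ((A * k - (A*k + p) + p) ^ 2 - 4 * (A * k * p + (A*k + p))) * (1-A^2)^2 < 0 := by
        rw [key]; nlinarith [mul_pos hA0 hf, sq_nonneg (A*(A*k+1))]
      nlinarith [hneg, hB]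
    · have key : ((A * k - (A*k + p) + A^2*p) ^ 2 - 4 * A^2 * (A * k * p + (A*k + p))) * (1-A^2)^2
          = -4*A^3*((k+A)*(A^3*k+1)) := by
        rw [hp]; field_simp; ring
      have hneg : ((A * k - (A*k + p) + A^2*p) ^ 2 - 4 * A^2 * (A * k * p + (A*k + p))) * (1-A^2)^2 < 0 := by
        rw [key]; nlinarith [mul_pos (pow_pos hA0 3) hf]
      nlinarith [hneg, hB]
  · -- case k < -1/A
    have hAk : A*k < -1 := by
      calc A*k = k*A := mul_comm A k
        _ < (-1/A)*A := mul_lt_mul_of_pos_right h1 hA0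
        _ = -1 := by field_simp
    have hinv : A^3 < 1/A := by
      rw [lt_div_iff₀ hA0]; nlinarith
    have h2 : k + A^3 < 0 := by
      have hrw : -1/A = -(1/A) := by ring
      rw [hrw] at h1; linarith
    have h3 : A*k + 1 < 0 := by linarith
    have hf : 0 < A*((A*k+1)*(k+A^3)) := mul_pos hA0 (mul_pos_of_neg_of_neg h3 h2)
    set p := 2*(A*k+A^2)/((1-A^2)^2) with hp
    refine ⟨p, A*k + A^2*p, ?_, ?_⟩
    · have key : ((A * k - (A*k + A^2*p) + p) ^ 2 - 4 * (A * k * p + (A*k + A^2*p))) * (1-A^2)^2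
          = -4*(A*((A*k+1)*(k+A^3))) := by
        rw [hp]; field_simp; ring
      have hneg : ((A * k - (A*k + A^2*p) + p) ^ 2 - 4 * (A * k * p + (A*k + A^2*p))) * (1-A^2)^2 < 0 := by
        rw [key]; linarith
      nlinarith [hneg, hB]
    · have key : ((A * k - (A*k + A^2*p) + A^2*p) ^ 2 - 4 * A^2 * (A * k * p + (A*k + A^2*p))) * (1-A^2)^2
          = -4*A^2*(A*((A*k+1)*(k+A^3)) + (A*k+A^2)^2) := by
        rw [hp]; field_simp; ring
      have hneg : ((A * k - (A*k + A^2*p) + A^2*p) ^ 2 - 4 * A^2 * (A * k * p + (A*k + A^2*p))) * (1-A^2)^2 < 0 := by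
        rw [key]; nlinarith [mul_pos (pow_pos hA0 2) hf, sq_nonneg (A*k+A^2)]
      nlinarith [hneg, hB]
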